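/- For complex numbers z_1, …, z_E and n ≥ E, the sum over all tuples (n_1, …, n_E) of positive integers with n_1 + ⋯ + n_E = n of Π_{e=1}^E z_e^{n_e} equals m_{n−1}[z_1, …, z_E] · Π_{e=1}^E z_e, where m_{n−1}(z) = z^{n−1} and the bracket denotes the divided difference (assuming the z_e are pairwise distinct). -/

import Mathlib

open Finset

/-- The divided difference of `f` at the points `z 0, …, z n`, defined by the
standard recursion. -/
noncomputable def dividedDiff {K : Type*} [Field K] (f : K → K) :
    (n : ℕ) → (Fin (n + 1) → K) → K
  | 0, z => f (z 0)
  | n + 1, z =>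
      (dividedDiff f n (fun i => z i.castSucc) - dividedDiff f n (fun i => z i.succ)) /
        (z 0 - z (Fin.last (n + 1)))

/-- Complete homogeneous sum in `E` variables of degree `m`. -/
noncomputable def Hsum (E m : ℕ) (z : Fin E → ℂ) : ℂ :=
  ∑ μ ∈ Finset.Nat.antidiagonalTuple E m, ∏ i, z i ^ μ i

lemma Hsum_zero (E : ℕ) (z : Fin E → ℂ) : Hsum E 0 z = 1 := by
  rw [Hsum, Finset.Nat.antidiagonalTuple_zero_right]
  simp

lemma Hsum_nil (m : ℕ) (z : Fin 0 → ℂ) : Hsum 0 (m + 1) z = 0 := by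
  rw [Hsum, Finset.Nat.antidiagonalTuple_zero_succ]
  simp

lemma Hsum_one (m : ℕ) (z : Fin 1 → ℂ) : Hsum 1 m z = z 0 ^ m := by
  rw [Hsum, Finset.Nat.antidiagonalTuple_one]
  simp

lemma Hsum_peel (E m : ℕ) (z : Fin (E + 1) → ℂ) :
    Hsum (E + 1) m z = ∑ a ∈ range (m + 1), z 0 ^ a * Hsum E (m - a) (z ∘ Fin.succ) := by
  have : (∑ a ∈ range (m + 1), z 0 ^ a * Hsum E (m - a) (z ∘ Fin.succ))
      = ∑ p ∈ (range (m + 1)).sigma (fun a => Finset.Nat.antidiagonalTuple E (m - a)),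
          z 0 ^ p.1 * ∏ i, z i.succ ^ p.2 i := by
    rw [Finset.sum_sigma]
    simp [Hsum, Finset.mul_sum, Function.comp]
  rw [this, Hsum]
  refine Finset.sum_bij' (fun μ _ => (⟨μ 0, Fin.tail μ⟩ : Σ _ : ℕ, Fin E → ℕ))
    (fun p _ => Fin.cons p.1 p.2) ?_ ?_ ?_ ?_ ?_
  · intro μ hμ
    rw [Finset.Nat.mem_antidiagonalTuple] at hμ
    simp only [Finset.mem_sigma, Finset.mem_range, Finset.Nat.mem_antidiagonalTuple]
    have h0 : μ 0 ≤ m := by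
      rw [← hμ]; exact Finset.single_le_sum (fun _ _ => Nat.zero_le _) (Finset.mem_univ _)
    have hs : μ 0 + ∑ i : Fin E, μ i.succ = m := by rw [← Fin.sum_univ_succ, hμ]
    have ht : ∑ i, Fin.tail μ i = ∑ i : Fin E, μ i.succ := rfl
    exact ⟨by omega, by omega⟩
  · intro p hp
    simp only [Finset.mem_sigma, Finset.mem_range, Finset.Nat.mem_antidiagonalTuple] at hp
    rw [Finset.Nat.mem_antidiagonalTuple, Fin.sum_cons]
    omega
  · intro μ _
    exact Fin.cons_self_tail μ
  · intro p _
    simp [Fin.tail_cons]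
  · intro μ _
    rw [Fin.prod_univ_succ]
    simp [Fin.tail]

lemma Hsum_succ_left (E m : ℕ) (z : Fin (E + 1) → ℂ) :
    Hsum (E + 1) (m + 1) z = z 0 * Hsum (E + 1) m z + Hsum E (m + 1) (z ∘ Fin.succ) := by
  rw [Hsum_peel E (m + 1) z, Hsum_peel E m z, Finset.sum_range_succ', Finset.mul_sum]
  simp only [pow_zero, one_mul, Nat.sub_zero]
  congr 1
  apply Finset.sum_congr rfl
  intro a _
  have h1 : m + 1 - (a + 1) = m - a := by omega
  rw [h1]
  ring

lemma Hsum_succ_right : ∀ (E m : ℕ) (z : Fin (E + 1) → ℂ),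
    Hsum (E + 1) (m + 1) z
      = z (Fin.last E) * Hsum (E + 1) m z + Hsum E (m + 1) (z ∘ Fin.castSucc) := by
  intro E
  induction E with
  | zero =>
    intro m z
    rw [Hsum_one, Hsum_one, Hsum_nil]
    have : z (Fin.last 0) = z 0 := rfl
    rw [this, pow_succ]
    ring
  | succ E ih =>
    intro m z
    rw [Hsum_peel (E + 1) (m + 1) z, Hsum_peel (E + 1) m z,
      Hsum_peel E (m + 1) (z ∘ Fin.castSucc)]
    have hz0 : (z ∘ Fin.castSucc) 0 = z 0 := rfl
    have hcs : (z ∘ Fin.castSucc) ∘ Fin.succ = (z ∘ Fin.succ) ∘ Fin.castSucc := by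
      funext i
      simp [Function.comp]
    have hlast : z (Fin.last (E + 1)) = (z ∘ Fin.succ) (Fin.last E) := by
      simp [Function.comp, Fin.succ_last]
    rw [hz0, hcs, hlast, Finset.mul_sum]
    rw [Finset.sum_range_succ
      (fun x => z 0 ^ x * Hsum (E + 1) (m + 1 - x) (z ∘ Fin.succ)) (m + 1)]
    rw [Finset.sum_range_succ
      (fun x => z 0 ^ x * Hsum E (m + 1 - x) ((z ∘ Fin.succ) ∘ Fin.castSucc)) (m + 1)]
    have hz1 : m + 1 - (m + 1) = 0 := by omega
    rw [hz1, Hsum_zero, Hsum_zero]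
    have hterm : ∀ x ∈ range (m + 1),
        z 0 ^ x * Hsum (E + 1) (m + 1 - x) (z ∘ Fin.succ)
          = (z ∘ Fin.succ) (Fin.last E) * (z 0 ^ x * Hsum (E + 1) (m - x) (z ∘ Fin.succ))
            + z 0 ^ x * Hsum E (m + 1 - x) ((z ∘ Fin.succ) ∘ Fin.castSucc) := by
      intro x hx
      rw [Finset.mem_range] at hx
      have hmx : m + 1 - x = (m - x) + 1 := by omega
      rw [hmx, ih (m - x) (z ∘ Fin.succ)]
      ring
    rw [Finset.sum_congr rfl hterm, Finset.sum_add_distrib]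
    ring

lemma Hsum_diff (E m : ℕ) (z : Fin (E + 2) → ℂ) :
    Hsum (E + 1) (m + 1) (z ∘ Fin.castSucc) - Hsum (E + 1) (m + 1) (z ∘ Fin.succ)
      = (z 0 - z (Fin.last (E + 1))) * Hsum (E + 2) m z := by
  have h1 := Hsum_succ_left (E + 1) m z
  have h2 := Hsum_succ_right (E + 1) m z
  linear_combination h1 - h2

lemma dividedDiff_pow : ∀ (k p : ℕ) (z : Fin (k + 1) → ℂ), Function.Injective z → k ≤ p →
    dividedDiff (fun w => w ^ p) k z = Hsum (k + 1) (p - k) z := by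
  intro k
  induction k with
  | zero =>
    intro p z _ _
    rw [dividedDiff, Hsum_one]
    simp
  | succ k ih =>
    intro p z hz hkp
    rw [dividedDiff]
    have hinj1 : Function.Injective (fun i : Fin (k + 1) => z i.castSucc) :=
      hz.comp (Fin.castSucc_injective _)
    have hinj2 : Function.Injective (fun i : Fin (k + 1) => z i.succ) :=
      hz.comp (Fin.succ_injective _)
    rw [ih p _ hinj1 (by omega), ih p _ hinj2 (by omega)]
    have hpk : p - k = (p - (k + 1)) + 1 := by omega
    have hfront : (fun i : Fin (k + 1) => z i.castSucc) = z ∘ Fin.castSucc := rfl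
    have hback : (fun i : Fin (k + 1) => z i.succ) = z ∘ Fin.succ := rfl
    rw [hpk, hfront, hback, Hsum_diff k (p - (k + 1)) z]
    have hne : z 0 - z (Fin.last (k + 1)) ≠ 0 := by
      intro h
      have h' : z 0 = z (Fin.last (k + 1)) := by linear_combination h
      have := hz h'
      simp [Fin.ext_iff] at this
    field_simp

theorem sum_monomials_simplex_eq_dividedDiff (k n : ℕ) (hn : k + 1 ≤ n)
    (z : Fin (k + 1) → ℂ) (hz : Function.Injective z) :
    ∑ ν ∈ (Fintype.piFinset fun _ : Fin (k + 1) => Finset.Icc 1 n).filter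
        (fun ν => ∑ e, ν e = n),
      ∏ e, z e ^ ν e
      = dividedDiff (fun w => w ^ (n - 1)) k z * ∏ e, z e := by
  rw [dividedDiff_pow k (n - 1) z hz (by omega)]
  have hdeg : n - 1 - k = n - (k + 1) := by omega
  rw [hdeg, Hsum, Finset.sum_mul]
  refine Finset.sum_bij' (fun ν _ => fun e => ν e - 1) (fun μ _ => fun e => μ e + 1)
    ?_ ?_ ?_ ?_ ?_
  · intro ν hν
    simp only [Finset.mem_filter, Fintype.mem_piFinset, Finset.mem_Icc] at hν
    obtain ⟨h1, h2⟩ := hν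
    simp only [Finset.Nat.mem_antidiagonalTuple]
    have h3 : ∀ e, 1 ≤ ν e := fun e => (h1 e).1
    have hsub : ∑ e, (ν e - 1) = ∑ e, ν e - ∑ _e : Fin (k + 1), 1 := by
      rw [eq_tsub_iff_add_eq_of_le, ← Finset.sum_add_distrib]
      · exact Finset.sum_congr rfl fun e _ => by have := h3 e; omega
      · exact Finset.sum_le_sum fun e _ => h3 e
    rw [hsub, h2]
    simp
  · intro μ hμ
    simp only [Finset.Nat.mem_antidiagonalTuple] at hμ
    simp only [Finset.mem_filter, Fintype.mem_piFinset, Finset.mem_Icc]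
    have hb : ∀ e, μ e ≤ n - (k + 1) := by
      intro e
      rw [← hμ]
      exact Finset.single_le_sum (fun _ _ => Nat.zero_le _) (Finset.mem_univ _)
    refine ⟨fun e => ⟨by omega, by have := hb e; omega⟩, ?_⟩
    rw [Finset.sum_add_distrib, hμ]
    simp
    omega
  · intro ν hν
    simp only [Finset.mem_filter, Fintype.mem_piFinset, Finset.mem_Icc] at hν
    funext e
    have := (hν.1 e).1
    beta_reduce
    omega
  · intro μ _
    funext e
    beta_reduce
    omega
  · intro ν hν
    simp only [Finset.mem_filter, Fintype.mem_piFinset, Finset.mem_Icc] at hν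
    beta_reduce
    rw [← Finset.prod_mul_distrib]
    refine Finset.prod_congr rfl fun e _ => ?_
    have h1 : 1 ≤ ν e := (hν.1 e).1
    rw [← pow_succ]
    congr 1
    omega
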